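/- Let Γ be a distance-biregular graph with the M-property and D₀ ≥ 2. Then n < 2k₁ + k₀. -/

import Mathlib

set_option maxHeartbeats 1000000

open Finset SimpleGraph Matrix

private lemma fin2aux : ∀ a b c : Fin 2, a ≠ b → b ≠ c → a = c := by decide

private lemma ex_dist_two {V : Type} {G : SimpleGraph V} (hconn : G.Connected)
    (σ : V → Fin 2) (hbip : ∀ x y : V, G.Adj x y → σ x ≠ σ y)
    {y x : V} (h2 : 2 ≤ G.dist y x) :
    ∃ u v : V, G.Adj y u ∧ G.Adj u v ∧ G.dist y v = 2 := by
  obtain ⟨p, hp, hlen⟩ := hconn.exists_path_of_dist y x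
  match p, hp, hlen with
  | SimpleGraph.Walk.nil, hp, hlen =>
    simp only [SimpleGraph.Walk.length_nil] at hlen; omega
  | SimpleGraph.Walk.cons h SimpleGraph.Walk.nil, hp, hlen =>
    simp only [SimpleGraph.Walk.length_cons, SimpleGraph.Walk.length_nil] at hlen; omega
  | SimpleGraph.Walk.cons (v := w₁) h (SimpleGraph.Walk.cons (v := w₂) h' r), hp, hlen =>
    refine ⟨w₁, w₂, h, h', ?_⟩
    have hyv : y ≠ w₂ := by
      have hnd := hp.support_nodup
      rw [SimpleGraph.Walk.support_cons] at hnd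
      have hy : y ∉ (SimpleGraph.Walk.cons h' r).support := (List.nodup_cons.mp hnd).1
      intro he
      apply hy
      rw [SimpleGraph.Walk.support_cons, he]
      exact List.mem_cons_of_mem _ r.start_mem_support
    have hle : G.dist y w₂ ≤ 2 := by
      have := SimpleGraph.dist_le (SimpleGraph.Walk.cons h (SimpleGraph.Walk.cons h' SimpleGraph.Walk.nil))
      simpa using this
    have hne1 : G.dist y w₂ ≠ 1 := by
      intro h1
      have hadj : G.Adj y w₂ := SimpleGraph.dist_eq_one_iff_adj.mp h1
      exact (hbip y w₂ hadj) (fin2aux _ _ _ (hbip y w₁ h) (hbip w₁ w₂ h'))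
    have hne0 : G.dist y w₂ ≠ 0 := by
      rw [SimpleGraph.dist_ne_zero_iff_ne_and_reachable]
      exact ⟨hyv, hconn.preconnected y w₂⟩
    omega

private lemma side_ineq {V : Type} [Fintype V] [DecidableEq V] (G : SimpleGraph V)
    [DecidableRel G.Adj]
    (σ : V → Fin 2) (hbip : ∀ x y : V, G.Adj x y → σ x ≠ σ y)
    (Lsharp : Matrix V V ℝ)
    (hM : ∀ x y : V, x ≠ y → Lsharp x y ≤ 0)
    (hP : ∀ x z : V, (G.lapMatrix ℝ * Lsharp) x z
        = (if x = z then (1:ℝ) else 0) - 1/(Fintype.card V : ℝ))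
    (hcol : ∀ z : V, ∑ x, Lsharp x z = 0)
    (y u v : V) (hyu : G.Adj y u) (huv : G.Adj u v) (hyv : G.dist y v = 2)
    (K0 K1 : ℝ) (hK0 : (G.degree y : ℝ) = K0)
    (hK1 : ∀ x : V, G.Adj y x → (G.degree x : ℝ) = K1) :
    ((Fintype.card V : ℝ) - 1 - K0)^2 ≤ (K1 - 1) * ((Fintype.card V : ℝ) - 1)
      ∧ 2 ≤ K1 ∧ K0 + 2 ≤ (Fintype.card V : ℝ) ∧ 1 ≤ K0 := by
  classical
  set nr : ℝ := (Fintype.card V : ℝ) with hnr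
  set L : Matrix V V ℝ := G.lapMatrix ℝ with hL
  -- basic nonadjacency / distinctness facts
  have hvy : v ≠ y := by
    intro he; rw [he] at hyv; simp [SimpleGraph.dist_self] at hyv
  have hyvnadj : ¬ G.Adj y v := by
    intro hadj
    have := SimpleGraph.dist_eq_one_iff_adj.mpr hadj
    omega
  have hK0nat : 1 ≤ G.degree y := by
    have : u ∈ G.neighborFinset y := by simpa using hyu
    exact Finset.card_pos.mpr ⟨u, this⟩
  have hK0one : 1 ≤ K0 := by
    rw [← hK0]; exact_mod_cast hK0nat
  have hK1two : 2 ≤ K1 := by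
    rw [← hK1 u hyu]
    have hsub : ({y, v} : Finset V) ⊆ G.neighborFinset u := by
      intro a ha
      simp only [Finset.mem_insert, Finset.mem_singleton] at ha
      rcases ha with rfl | rfl
      · simpa using hyu.symm
      · simpa using huv
    have hcard : ({y, v} : Finset V).card = 2 := by
      rw [Finset.card_insert_of_notMem (by simpa using Ne.symm hvy), Finset.card_singleton]
    have := Finset.card_le_card hsub
    rw [hcard] at this
    exact_mod_cast this
  have hnK0 : K0 + 2 ≤ nr := by
    have hyn : y ∉ G.neighborFinset y := by simp
    have hvn : v ∉ G.neighborFinset y := by simpa using hyvnadj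
    have h1 : (insert y (insert v (G.neighborFinset y))).card = G.degree y + 2 := by
      rw [Finset.card_insert_of_notMem (by simp [hvy.symm, hyn]),
        Finset.card_insert_of_notMem hvn]
      rfl
    have h2 : (insert y (insert v (G.neighborFinset y))).card ≤ Fintype.card V :=
      Finset.card_le_univ _
    rw [h1] at h2
    rw [← hK0, hnr]
    exact_mod_cast h2
  have hnr0 : (0:ℝ) < nr := by
    have : Nonempty V := ⟨y⟩
    have : 0 < Fintype.card V := Fintype.card_pos
    rw [hnr]; exact_mod_cast this
  have hK0pos : (0:ℝ) < K0 := lt_of_lt_of_le one_pos hK0one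
  have hK1m1 : (0:ℝ) < K1 - 1 := by linarith
  -- the test vector
  set A : ℝ := (nr - 1)/(nr*K0) + (nr - 1 - K0)/(nr*K0*(K1-1)) with hA
  set B : ℝ := (nr - 1 - K0)/(nr*K0*(K1-1)) with hB
  set g : V → ℝ := fun x => (if x = y then A else 0) + (if G.Adj y x then B else 0) with hg
  set h : V → ℝ := fun x => Lsharp x y with hh
  set w : V → ℝ := fun x => (if x = y then (1:ℝ) else 0) - 1/nr with hw
  have hgy : g y = A := by simp [hg]
  have hgadj : ∀ x : V, G.Adj y x → g x = B := by
    intro x hx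
    have : x ≠ y := hx.ne'
    simp [hg, this, hx]
  have hg0 : ∀ x : V, x ≠ y → ¬ G.Adj y x → g x = 0 := by
    intro x h1 h2; simp [hg, h1, h2]
  have hcardN : ((G.neighborFinset y).card : ℝ) = K0 := by
    rw [SimpleGraph.card_neighborFinset_eq_degree]; exact hK0
  -- sum of g
  have hgsum : ∑ x, g x = A + B * K0 := by
    rw [hg, Finset.sum_add_distrib]
    congr 1
    · simp
    · rw [← Finset.sum_filter, ← SimpleGraph.neighborFinset_eq_filter, Finset.sum_const,
        nsmul_eq_mul, hcardN, mul_comm]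
  -- L *ᵥ g at y
  have hNg : ∑ x ∈ G.neighborFinset y, g x = K0 * B := by
    rw [Finset.sum_congr rfl (fun x hx => hgadj x (by simpa using hx)),
      Finset.sum_const, nsmul_eq_mul, hcardN]
  have hLgy : (L *ᵥ g) y = K0 * (A - B) := by
    rw [hL, SimpleGraph.lapMatrix_mulVec_apply, hNg, hgy, hK0]
    ring
  have hLgadj : ∀ x : V, G.Adj y x → (L *ᵥ g) x = K1 * B - A := by
    intro x hx
    rw [hL, SimpleGraph.lapMatrix_mulVec_apply, hK1 x hx, hgadj x hx]
    have hsum2 : ∑ z ∈ G.neighborFinset x, g z = A := by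
      have hstep : ∀ z ∈ G.neighborFinset x, g z = if z = y then A else 0 := by
        intro z hz
        by_cases hzy : z = y
        · simp [hzy, hgy]
        · have hadjxz : G.Adj x z := by simpa using hz
          have hne : ¬ G.Adj y z := by
            intro hyz
            exact (hbip y z hyz) (fin2aux _ _ _ (hbip y x hx) (hbip x z hadjxz))
          simp [hzy, hne, hg]
      rw [Finset.sum_congr rfl hstep, Finset.sum_ite_eq' _ y (fun _ => A)]
      simp [hx.symm]
    rw [hsum2]
  -- dot products with w
  have hdotw : ∀ f : V → ℝ, f ⬝ᵥ w = f y - (∑ x, f x)/nr := by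
    intro f
    have e1 : f ⬝ᵥ w = ∑ x, (f x * (if x = y then 1 else 0) - f x * (1/nr)) := by
      simp only [dotProduct, hw]
      exact Finset.sum_congr rfl (fun x _ => by ring)
    rw [e1, Finset.sum_sub_distrib]
    congr 1
    · simp [mul_ite]
    · rw [Finset.sum_div]
      exact Finset.sum_congr rfl (fun x _ => by ring)
  have hgw : g ⬝ᵥ w = A - (A + B*K0)/nr := by rw [hdotw, hgy, hgsum]
  have hhw : h ⬝ᵥ w = Lsharp y y := by
    rw [hdotw]
    have : ∑ x, h x = 0 := by rw [hh]; exact hcol y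
    rw [this]
    simp [hh]
  have hLh : L *ᵥ h = w := by
    funext x
    have e2 : (L *ᵥ h) x = (L * Lsharp) x y := by
      simp [Matrix.mulVec, dotProduct, Matrix.mul_apply, hh]
    rw [e2, hP x y, hw]
  have hgLg : g ⬝ᵥ (L *ᵥ g) = A * (K0*(A-B)) + K0 * (B * (K1*B - A)) := by
    have e3 : g ⬝ᵥ (L *ᵥ g)
        = ∑ x, ((if x = y then A else 0) * (L *ᵥ g) x
            + (if G.Adj y x then B else 0) * (L *ᵥ g) x) := by
      simp only [dotProduct, hg, add_mul]
    rw [e3, Finset.sum_add_distrib]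
    congr 1
    · calc ∑ x, (if x = y then A else 0) * (L *ᵥ g) x
          = ∑ x, (if x = y then A * (L *ᵥ g) x else 0) := by
            exact Finset.sum_congr rfl (fun x _ => by split <;> simp)
        _ = A * (L *ᵥ g) y := by rw [Finset.sum_ite_eq' _ y (fun x => A * (L *ᵥ g) x)]; simp
        _ = A * (K0*(A-B)) := by rw [hLgy]
    · calc ∑ x, (if G.Adj y x then B else 0) * (L *ᵥ g) x
          = ∑ x, (if G.Adj y x then B * (L *ᵥ g) x else 0) := by
            exact Finset.sum_congr rfl (fun x _ => by split <;> simp)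
        _ = ∑ x ∈ G.neighborFinset y, B * (L *ᵥ g) x := by
            rw [SimpleGraph.neighborFinset_eq_filter, Finset.sum_filter]
        _ = ∑ x ∈ G.neighborFinset y, B * (K1*B - A) := by
            exact Finset.sum_congr rfl (fun x hx => by rw [hLgadj x (by simpa using hx)])
        _ = K0 * (B * (K1*B - A)) := by rw [Finset.sum_const, nsmul_eq_mul, hcardN]
  have hsymL : Lᵀ = L := by rw [hL]; exact G.isSymm_lapMatrix (R := ℝ)
  have hswap : h ⬝ᵥ (L *ᵥ g) = g ⬝ᵥ w := by
    rw [Matrix.dotProduct_mulVec, ← hsymL, Matrix.vecMul_transpose, hLh,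
      dotProduct_comm]
  have hpsd : 0 ≤ Lsharp y y - 2*(g ⬝ᵥ w) + g ⬝ᵥ (L *ᵥ g) := by
    have h0 := (SimpleGraph.posSemidef_lapMatrix ℝ G).dotProduct_mulVec_nonneg (h - g)
    rw [star_trivial] at h0
    rw [show G.lapMatrix ℝ = L from rfl] at h0
    rw [Matrix.mulVec_sub, hLh] at h0
    have e4 : (h - g) ⬝ᵥ (w - L *ᵥ g)
        = h ⬝ᵥ w - h ⬝ᵥ (L *ᵥ g) - g ⬝ᵥ w + g ⬝ᵥ (L *ᵥ g) := by
      rw [sub_dotProduct, dotProduct_sub, dotProduct_sub]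
      ring
    rw [e4, hhw, hswap] at h0
    linarith
  have hupper : K0 * Lsharp y y ≤ 1 - 1/nr := by
    have hPyy := hP y y
    rw [Matrix.mul_apply] at hPyy
    have hLent : ∀ z, L y z
        = (if y = z then (G.degree y : ℝ) else 0) - (if G.Adj y z then 1 else 0) := by
      intro z
      rw [hL]
      simp [SimpleGraph.lapMatrix, Matrix.sub_apply, SimpleGraph.degMatrix,
        Matrix.diagonal_apply, SimpleGraph.adjMatrix_apply]
    have e5 : ∑ z, L y z * Lsharp z y
        = K0 * Lsharp y y - ∑ z ∈ G.neighborFinset y, Lsharp z y := by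
      calc ∑ z, L y z * Lsharp z y
          = ∑ z, ((if y = z then (G.degree y : ℝ) * Lsharp z y else 0)
              - (if G.Adj y z then Lsharp z y else 0)) := by
            refine Finset.sum_congr rfl (fun z _ => by rw [hLent z]; split <;> split <;> ring)
        _ = (∑ z, (if y = z then (G.degree y : ℝ) * Lsharp z y else 0))
              - ∑ z, (if G.Adj y z then Lsharp z y else 0) := Finset.sum_sub_distrib _ _
        _ = K0 * Lsharp y y - ∑ z ∈ G.neighborFinset y, Lsharp z y := by
            rw [Finset.sum_ite_eq _ y (fun z => (G.degree y : ℝ) * Lsharp z y)]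
            rw [SimpleGraph.neighborFinset_eq_filter, Finset.sum_filter]
            simp [hK0]
    rw [e5] at hPyy
    have hT : ∑ z ∈ G.neighborFinset y, Lsharp z y ≤ 0 := by
      apply Finset.sum_nonpos
      intro z hz
      exact hM z y (G.ne_of_adj (by simpa using hz)).symm
    norm_num at hPyy
    rw [show (1:ℝ)/nr = nr⁻¹ from one_div nr]
    linarith [hPyy]
  -- combine
  have hfromPsd : 2*(g ⬝ᵥ w) - g ⬝ᵥ (L *ᵥ g) ≤ Lsharp y y := by linarith
  have hmain : K0 * (2*(A - (A + B*K0)/nr) - (A * (K0*(A-B)) + K0 * (B * (K1*B - A)))) ≤ 1 - 1/nr := by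
    rw [← hgw, ← hgLg]
    calc K0 * (2*(g ⬝ᵥ w) - g ⬝ᵥ (L *ᵥ g)) ≤ K0 * Lsharp y y :=
          mul_le_mul_of_nonneg_left hfromPsd (le_of_lt hK0pos)
      _ ≤ 1 - 1/nr := hupper
  have hnrne : nr ≠ 0 := ne_of_gt hnr0
  have hK0ne : K0 ≠ 0 := ne_of_gt hK0pos
  have hK1ne : K1 - 1 ≠ 0 := ne_of_gt hK1m1
  have key : K0 * (2*(A - (A + B*K0)/nr) - (A * (K0*(A-B)) + K0 * (B * (K1*B - A))))
      = ((nr-1)^2*(K1-1) + (nr-1-K0)^2)/(nr^2*(K1-1)) := by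
    rw [hA, hB]
    field_simp
    ring
  rw [key] at hmain
  have hpos2 : (0:ℝ) < nr^2*(K1-1) := by positivity
  rw [div_le_iff₀ hpos2] at hmain
  have hrhs : (1 - 1/nr) * (nr^2*(K1-1)) = (nr-1)*nr*(K1-1) := by
    field_simp
  rw [hrhs] at hmain
  refine ⟨by nlinarith [hmain], hK1two, hnK0, hK0one⟩

private lemma lap_props {V : Type} [Fintype V] [DecidableEq V] (G : SimpleGraph V) [DecidableRel G.Adj]
    (hconn : G.Connected) (hcard : 2 ≤ Fintype.card V)
    (Lsharp : Matrix V V ℝ)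
    (hLs1 : G.lapMatrix ℝ * Lsharp * G.lapMatrix ℝ = G.lapMatrix ℝ)
    (hLs2 : Lsharp * G.lapMatrix ℝ * Lsharp = Lsharp)
    (hLs3 : G.lapMatrix ℝ * Lsharp = Lsharp * G.lapMatrix ℝ) :
    (∀ x z : V, (G.lapMatrix ℝ * Lsharp) x z
        = (if x = z then (1:ℝ) else 0) - 1/(Fintype.card V : ℝ))
      ∧ (∀ z : V, ∑ x, Lsharp x z = 0) := by
  classical
  set nr : ℝ := (Fintype.card V : ℝ) with hnr
  set L : Matrix V V ℝ := G.lapMatrix ℝ with hL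
  set X : Matrix V V ℝ := Lsharp with hX
  have hsymL : Lᵀ = L := G.isSymm_lapMatrix (R := ℝ)
  -- transposed hypotheses
  have t1 : L * Xᵀ * L = L := by
    have := congrArg Matrix.transpose hLs1
    rw [Matrix.transpose_mul, Matrix.transpose_mul, hsymL] at this
    rw [← Matrix.mul_assoc] at this
    exact this
  have t3 : L * Xᵀ = Xᵀ * L := by
    have := congrArg Matrix.transpose hLs3
    rw [Matrix.transpose_mul, Matrix.transpose_mul, hsymL] at this
    exact this.symm
  have t2 : Xᵀ * L * Xᵀ = Xᵀ := by
    have := congrArg Matrix.transpose hLs2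
    rw [Matrix.transpose_mul, Matrix.transpose_mul, hsymL] at this
    rw [← Matrix.mul_assoc] at this
    exact this
  -- uniqueness of group inverse: X = Xᵀ
  have e2 : Xᵀ * L = (Xᵀ * L) * (X * L) := by
    calc Xᵀ * L = Xᵀ * (L * X * L) := by rw [hLs1]
      _ = (Xᵀ * L) * (X * L) := by simp only [Matrix.mul_assoc]
  have e3 : X * L = (Xᵀ * L) * (X * L) := by
    calc X * L = L * X := hLs3.symm
      _ = (L * Xᵀ * L) * X := by rw [t1]
      _ = ((Xᵀ * L) * L) * X := by rw [t3]
      _ = (Xᵀ * L) * (L * X) := by simp only [Matrix.mul_assoc]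
      _ = (Xᵀ * L) * (X * L) := by rw [hLs3]
  have e4 : X * L = Xᵀ * L := e3.trans e2.symm
  have e5 : L * X = L * Xᵀ := by rw [hLs3, e4, t3]
  have hsymX : Xᵀ = X := by
    calc Xᵀ = Xᵀ * L * Xᵀ := t2.symm
      _ = Xᵀ * (L * Xᵀ) := by rw [Matrix.mul_assoc]
      _ = Xᵀ * (L * X) := by rw [e5]
      _ = (Xᵀ * L) * X := by rw [Matrix.mul_assoc]
      _ = (X * L) * X := by rw [e4]
      _ = X := hLs2
  -- X *ᵥ 1 = 0
  have hLX1 : L *ᵥ (X *ᵥ (fun _ => (1:ℝ))) = 0 := by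
    rw [Matrix.mulVec_mulVec, hLs3, ← Matrix.mulVec_mulVec,
      SimpleGraph.lapMatrix_mulVec_const_eq_zero, Matrix.mulVec_zero]
  have hX1 : X *ᵥ (fun _ => (1:ℝ)) = 0 := by
    calc X *ᵥ (fun _ => (1:ℝ)) = ((X * L) * X) *ᵥ (fun _ => (1:ℝ)) := by rw [hLs2]
      _ = 0 := by
        rw [← Matrix.mulVec_mulVec, ← Matrix.mulVec_mulVec, hLX1, Matrix.mulVec_zero]
  have hrowX : ∀ x : V, ∑ z, X x z = 0 := by
    intro x
    have := congrFun hX1 x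
    simpa [Matrix.mulVec, dotProduct] using this
  have hcol : ∀ z : V, ∑ x, Lsharp x z = 0 := by
    intro z
    have : ∀ x : V, X x z = X z x := by
      intro x
      conv_lhs => rw [← hsymX]
      rfl
    rw [Finset.sum_congr rfl (fun x _ => this x)]
    exact hrowX z
  -- row sums of L
  have hrowL : ∀ x : V, ∑ z, L x z = 0 := by
    intro x
    have := congrFun (SimpleGraph.lapMatrix_mulVec_const_eq_zero (R := ℝ) G) x
    simpa [Matrix.mulVec, dotProduct] using this
  have hnr0 : (0:ℝ) < nr := by
    rw [hnr]; exact_mod_cast lt_of_lt_of_le two_pos hcard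
  have hnrne : nr ≠ 0 := ne_of_gt hnr0
  -- Q matrix
  set Q : Matrix V V ℝ := Matrix.of (fun x z => (if x = z then (1:ℝ) else 0) - 1/nr) with hQ
  have hLQ : L * Q = L := by
    ext x z
    rw [Matrix.mul_apply]
    calc ∑ u, L x u * ((if u = z then (1:ℝ) else 0) - 1/nr)
        = ∑ u, ((if u = z then L x u else 0) - L x u * (1/nr)) := by
          exact Finset.sum_congr rfl (fun u _ => by split <;> ring)
      _ = (∑ u, (if u = z then L x u else 0)) - (∑ u, L x u) * (1/nr) := by
          rw [Finset.sum_sub_distrib, Finset.sum_mul]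
      _ = L x z := by rw [Finset.sum_ite_eq' _ z (fun u => L x u), hrowL x]; simp
  have hLP : L * (L * X) = L := by
    calc L * (L * X) = L * (X * L) := by rw [hLs3]
      _ = (L * X) * L := by rw [Matrix.mul_assoc]
      _ = L := hLs1
  set M : Matrix V V ℝ := L * X - Q with hMdef
  have hLM : L * M = 0 := by
    rw [hMdef, Matrix.mul_sub, hLP, hLQ, sub_self]
  have hMsym : Mᵀ = M := by
    rw [hMdef, Matrix.transpose_sub, Matrix.transpose_mul, hsymL, hsymX, ← hLs3]
    congr 1
    ext x z
    simp only [Matrix.transpose_apply, hQ, Matrix.of_apply]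
    by_cases hxz : x = z
    · subst hxz; rfl
    · rw [if_neg hxz, if_neg (Ne.symm hxz)]
  have hMcol : ∀ z x x' : V, M x z = M x' z := by
    intro z x x'
    have hv : L *ᵥ (fun t => M t z) = 0 := by
      funext s
      have : (L *ᵥ (fun t => M t z)) s = (L * M) s z := by
        simp [Matrix.mulVec, dotProduct, Matrix.mul_apply]
      rw [this, hLM]
      rfl
    have := (SimpleGraph.lapMatrix_mulVec_eq_zero_iff_forall_reachable G).mp hv
    exact this x x' (hconn.preconnected x x')
  have hP1 : (L * X) *ᵥ (fun _ => (1:ℝ)) = 0 := by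
    rw [← Matrix.mulVec_mulVec]; exact hLX1
  have hMrow : ∀ x : V, ∑ z, M x z = 0 := by
    intro x
    have h1 : ∑ z, (L * X) x z = 0 := by
      have := congrFun hP1 x
      simpa [Matrix.mulVec, dotProduct] using this
    have h2 : ∑ z, Q x z = 0 := by
      rw [hQ]
      simp only [Matrix.of_apply]
      rw [Finset.sum_sub_distrib, Finset.sum_ite_eq _ x (fun _ => (1:ℝ))]
      simp only [Finset.mem_univ, if_true, Finset.sum_const, Finset.card_univ,
        nsmul_eq_mul]
      rw [← hnr]
      field_simp
      norm_num
    rw [hMdef]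
    simp only [Matrix.sub_apply]
    rw [Finset.sum_sub_distrib, h1, h2, sub_self]
  have hM0 : ∀ x z : V, M x z = 0 := by
    intro x z
    have hen : M x z = M x x := by
      have h1 : M x z = M z x := (congrFun (congrFun hMsym z) x).symm ▸ rfl
      rw [h1]
      exact hMcol x z x
    have hall : ∀ z' : V, M x z' = M x x := by
      intro z'
      have h1 : M x z' = M z' x := (congrFun (congrFun hMsym z') x).symm ▸ rfl
      rw [h1]
      exact hMcol x z' x
    have hsum : ∑ z', M x z' = (Fintype.card V : ℝ) * M x x := by
      rw [Finset.sum_congr rfl (fun z' _ => hall z'), Finset.sum_const, Finset.card_univ,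
        nsmul_eq_mul]
    rw [hMrow x] at hsum
    have : M x x = 0 := by
      have := hsum.symm
      rw [← hnr] at this
      rcases mul_eq_zero.mp this with h | h
      · exact absurd h hnrne
      · exact h
    rw [hen, this]
  have hPfin : ∀ x z : V, (L * Lsharp) x z = (if x = z then (1:ℝ) else 0) - 1/nr := by
    intro x z
    have := hM0 x z
    rw [hMdef, Matrix.sub_apply] at this
    have h2 : (L * X) x z = Q x z := by linarith
    rw [h2, hQ]
    rfl
  exact ⟨hPfin, hcol⟩


theorem stmt16 {V : Type} [Fintype V] [DecidableEq V]
    (G : SimpleGraph V) [DecidableRel G.Adj]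
    (hconn : G.Connected) (hcard : 2 ≤ Fintype.card V)
    (σ : V → Fin 2)
    (hbip : ∀ x y : V, G.Adj x y → σ x ≠ σ y)
    (k : Fin 2 → ℕ)
    (hdeg : ∀ x : V, G.degree x = k (σ x))
    (c b : Fin 2 → ℕ → ℕ)
    (hc : ∀ (x y : V) (i : ℕ), G.dist x y = i →
      (Finset.univ.filter (fun z => G.dist x z = i - 1 ∧ G.Adj y z)).card = c (σ x) i)
    (hb : ∀ (x y : V) (i : ℕ), G.dist x y = i →
      (Finset.univ.filter (fun z => G.dist x z = i + 1 ∧ G.Adj y z)).card = b (σ x) i)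
    (D : Fin 2 → ℕ)
    (hDub : ∀ x y : V, G.dist x y ≤ D (σ x))
    (hDmax : ∀ ℓ : Fin 2, ∃ x y : V, σ x = ℓ ∧ G.dist x y = D ℓ)
    (hD0 : 1 ≤ D 0) (hD01 : D 0 ≤ D 1)
    (Lsharp : Matrix V V ℝ)
    (hLs1 : G.lapMatrix ℝ * Lsharp * G.lapMatrix ℝ = G.lapMatrix ℝ)
    (hLs2 : Lsharp * G.lapMatrix ℝ * Lsharp = Lsharp)
    (hLs3 : G.lapMatrix ℝ * Lsharp = Lsharp * G.lapMatrix ℝ)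
    (hM : ∀ x y : V, x ≠ y → Lsharp x y ≤ 0)
    (hD02 : 2 ≤ D 0) :
    Fintype.card V < 2 * k 1 + k 0 := by
  classical
  obtain ⟨hP, hcol⟩ := lap_props G hconn hcard Lsharp hLs1 hLs2 hLs3
  have fne0 : ∀ a : Fin 2, a ≠ 0 → a = 1 := by decide
  have fne1 : ∀ a : Fin 2, a ≠ 1 → a = 0 := by decide
  -- side 0
  obtain ⟨y0, z0, hy0, hd0⟩ := hDmax 0
  have h20 : 2 ≤ G.dist y0 z0 := by rw [hd0]; exact hD02
  obtain ⟨u0, v0, hyu0, huv0, hdist0⟩ := ex_dist_two hconn σ hbip h20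
  have hK00 : (G.degree y0 : ℝ) = ((k 0 : ℕ) : ℝ) := by rw [hdeg y0, hy0]
  have hK10 : ∀ x : V, G.Adj y0 x → (G.degree x : ℝ) = ((k 1 : ℕ) : ℝ) := by
    intro x hx
    have hne : σ x ≠ 0 := by rw [← hy0]; exact (hbip y0 x hx).symm
    rw [hdeg x, fne0 _ hne]
  obtain ⟨q0, k1two, nb0, k0one⟩ := side_ineq G σ hbip Lsharp hM hP hcol
    y0 u0 v0 hyu0 huv0 hdist0 _ _ hK00 hK10
  -- side 1
  obtain ⟨y1, z1, hy1, hd1⟩ := hDmax 1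
  have h21 : 2 ≤ G.dist y1 z1 := by rw [hd1]; exact le_trans hD02 hD01
  obtain ⟨u1, v1, hyu1, huv1, hdist1⟩ := ex_dist_two hconn σ hbip h21
  have hK01 : (G.degree y1 : ℝ) = ((k 1 : ℕ) : ℝ) := by rw [hdeg y1, hy1]
  have hK11 : ∀ x : V, G.Adj y1 x → (G.degree x : ℝ) = ((k 0 : ℕ) : ℝ) := by
    intro x hx
    have hne : σ x ≠ 1 := by rw [← hy1]; exact (hbip y1 x hx).symm
    rw [hdeg x, fne1 _ hne]
  obtain ⟨q1, k0two, nb1, k1one⟩ := side_ineq G σ hbip Lsharp hM hP hcol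
    y1 u1 v1 hyu1 huv1 hdist1 _ _ hK01 hK11
  -- final arithmetic
  by_contra hcon
  push_neg at hcon
  have hconR : 2*((k 1 : ℕ) : ℝ) + ((k 0 : ℕ) : ℝ) ≤ (Fintype.card V : ℝ) := by
    exact_mod_cast hcon
  set K0 : ℝ := ((k 0 : ℕ) : ℝ)
  set K1 : ℝ := ((k 1 : ℕ) : ℝ)
  set M : ℝ := (Fintype.card V : ℝ) - 1 with hMdef
  have hMge : 2*K1 + K0 - 1 ≤ M := by rw [hMdef]; linarith
  have hq1 : (M - K1)^2 ≤ (K0 - 1)*M := q1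
  have hq0 : (M - K0)^2 ≤ (K1 - 1)*M := q0
  nlinarith [sq_nonneg (M-K0-K1+1), sq_nonneg (M-K0-2*K1+1),
    mul_nonneg (sub_nonneg.2 hMge) (sub_nonneg.2 k1two),
    mul_nonneg (sub_nonneg.2 hMge) (sub_nonneg.2 k0two), sq_nonneg (K0-K1)]
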